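/- In the setting of the previous bijection: if Λ' is a vertex lattice in L₀^♯ containing p⁻¹x₀, then Λ' = (Λ' ∩ L₀) ⊕ ℤ_p(p⁻¹x₀). Concretely, every v' ∈ Λ' written as v' = v + a·(p⁻¹x₀) with v ∈ L₀ and a ∈ ℚ_p automatically has a ∈ ℤ_p. -/

import Mathlib

/-- The dual lattice of a `ℤ_p`-lattice `Λ` inside the `ℚ_p`-subspace `L` of `W`,
with respect to the bilinear form `[v,w] = polar Q v w`:
`Λ^∨ = {v ∈ L : [v, Λ] ⊆ ℤ_p}`. -/
noncomputable def dualLattice {p : ℕ} [Fact p.Prime] {W : Type*} [AddCommGroup W]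
    [Module ℚ_[p] W] [Module ℤ_[p] W] [IsScalarTower ℤ_[p] ℚ_[p] W]
    (Q : QuadraticForm ℚ_[p] W) (L : Submodule ℚ_[p] W) (Λ : Submodule ℤ_[p] W) :
    Submodule ℤ_[p] W :=
  L.restrictScalars ℤ_[p] ⊓
    ⨅ w ∈ Λ, Submodule.comap
      (((QuadraticMap.polarBilin Q).flip w).restrictScalars ℤ_[p])
      (1 : Submodule ℤ_[p] ℚ_[p])

/-- `Λ` is a vertex lattice in the subspace `L`: a full `ℤ_p`-lattice in `L` with
`pΛ ⊆ Λ^∨ ⊆ Λ` (duals taken inside `L`). -/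
def IsVertexLattice {p : ℕ} [Fact p.Prime] {W : Type*} [AddCommGroup W]
    [Module ℚ_[p] W] [Module ℤ_[p] W] [IsScalarTower ℤ_[p] ℚ_[p] W]
    (Q : QuadraticForm ℚ_[p] W) (L : Submodule ℚ_[p] W) (Λ : Submodule ℤ_[p] W) : Prop :=
  (Λ : Set W) ⊆ (L : Set W) ∧ Submodule.span ℚ_[p] (Λ : Set W) = L ∧
  (∀ v ∈ Λ, (p : ℤ_[p]) • v ∈ dualLattice Q L Λ) ∧ dualLattice Q L Λ ≤ Λ

/-- The orthogonal complement of `x₀` with respect to the polar form of `Q`. -/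
noncomputable def perpSpace {p : ℕ} [Fact p.Prime] {W : Type*} [AddCommGroup W]
    [Module ℚ_[p] W] (Q : QuadraticForm ℚ_[p] W) (x₀ : W) : Submodule ℚ_[p] W :=
  LinearMap.BilinForm.orthogonal (QuadraticMap.polarBilin Q) (Submodule.span ℚ_[p] {x₀})

/-- If `Λ'` is a vertex lattice in `L₀^♯ = W` containing `p⁻¹x₀`
(where `[x₀,x₀] = p·u`, `u ∈ ℤ_p^×`), then `Λ' = (Λ' ∩ L₀) ⊕ ℤ_p(p⁻¹x₀)`; concretely,
whenever `v' ∈ Λ'` is written as `v' = v + a • (p⁻¹x₀)` with `v ∈ L₀ = x₀^⊥` and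
`a ∈ ℚ_p`, automatically `a ∈ ℤ_p` (i.e. `‖a‖ ≤ 1`) and `v ∈ Λ'`. -/
theorem stmt_7 (p : ℕ) [Fact p.Prime] (hp : p ≠ 2)
    (W : Type*) [AddCommGroup W] [Module ℚ_[p] W] [Module ℤ_[p] W]
    [IsScalarTower ℤ_[p] ℚ_[p] W] [FiniteDimensional ℚ_[p] W]
    (Q : QuadraticForm ℚ_[p] W) (hQ : (QuadraticMap.polarBilin Q).Nondegenerate)
    (x₀ : W) (u : ℤ_[p]ˣ)
    (hx₀ : QuadraticMap.polar Q x₀ x₀ = (p : ℚ_[p]) * ((u : ℤ_[p]) : ℚ_[p]))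
    (Λ' : Submodule ℤ_[p] W) (hΛ' : IsVertexLattice Q ⊤ Λ')
    (hx : (p : ℚ_[p])⁻¹ • x₀ ∈ Λ') :
    Λ' = (Λ' ⊓ (perpSpace Q x₀).restrictScalars ℤ_[p]) ⊔
        Submodule.span ℤ_[p] {(p : ℚ_[p])⁻¹ • x₀} ∧
    ∀ v' ∈ Λ', ∀ (v : W) (a : ℚ_[p]), QuadraticMap.polar Q v x₀ = 0 →
      v' = v + a • ((p : ℚ_[p])⁻¹ • x₀) → ‖a‖ ≤ 1 ∧ v ∈ Λ' := by
  have hp0 : (p : ℚ_[p]) ≠ 0 := Nat.cast_ne_zero.mpr (Fact.out : p.Prime).ne_zero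
  have hu1 : ‖((u : ℤ_[p]) : ℚ_[p])‖ = 1 := by
    rw [← PadicInt.norm_def]; exact PadicInt.norm_units u
  have hu0 : ((u : ℤ_[p]) : ℚ_[p]) ≠ 0 := by
    intro h; rw [h, norm_zero] at hu1; norm_num at hu1
  set e : W := (p : ℚ_[p])⁻¹ • x₀ with he
  -- integrality of p * [e, w] for w ∈ Λ'
  have hpair : ∀ w ∈ Λ', ‖(p : ℚ_[p]) * QuadraticMap.polar Q e w‖ ≤ 1 := by
    intro w hw
    have hdual := hΛ'.2.2.1 e hx
    rw [dualLattice, Submodule.mem_inf] at hdual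
    have h2 := hdual.2
    rw [Submodule.mem_iInf] at h2
    have h3 := h2 w
    rw [Submodule.mem_iInf] at h3
    have h4 := h3 hw
    rw [Submodule.mem_comap, Submodule.mem_one] at h4
    obtain ⟨y, hy⟩ := h4
    simp only [LinearMap.coe_restrictScalars, LinearMap.flip_apply,
      QuadraticMap.polarBilin_apply_apply, PadicInt.algebraMap_apply] at hy
    have hsm : ((p : ℤ_[p])) • e = ((p : ℚ_[p])) • e := by
      rw [Nat.cast_smul_eq_nsmul, Nat.cast_smul_eq_nsmul]
    have : QuadraticMap.polar Q ((p : ℚ_[p]) • e) w = (y : ℚ_[p]) := by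
      rw [← hsm]; exact hy.symm
    rw [QuadraticMap.polar_smul_left, smul_eq_mul] at this
    rw [this, ← PadicInt.norm_def]
    exact PadicInt.norm_le_one y
  have key : ∀ v' ∈ Λ', ∀ (v : W) (a : ℚ_[p]), QuadraticMap.polar Q v x₀ = 0 →
      v' = v + a • e → ‖a‖ ≤ 1 ∧ v ∈ Λ' := by
    intro v' hv' v a hv heq
    have h1 := hpair v' hv'
    have hev : QuadraticMap.polar Q e v = 0 := by
      rw [he, QuadraticMap.polar_smul_left, QuadraticMap.polar_comm, hv, smul_zero]
    have hee : QuadraticMap.polar Q e e = (p : ℚ_[p])⁻¹ * ((u : ℤ_[p]) : ℚ_[p]) := by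
      rw [he, QuadraticMap.polar_smul_left, QuadraticMap.polar_smul_right, hx₀]
      simp only [smul_eq_mul]
      field_simp
    have hcalc : (p : ℚ_[p]) * QuadraticMap.polar Q e v' = a * ((u : ℤ_[p]) : ℚ_[p]) := by
      rw [heq, QuadraticMap.polar_add_right, QuadraticMap.polar_smul_right, hev, hee]
      simp only [smul_eq_mul, zero_add]
      field_simp
    rw [hcalc, norm_mul, hu1, mul_one] at h1
    refine ⟨h1, ?_⟩
    set b : ℤ_[p] := ⟨a, h1⟩ with hb
    have hba : ((b : ℤ_[p]) : ℚ_[p]) = a := rfl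
    have hae : a • e = b • e := by
      rw [← algebraMap_smul (R := ℤ_[p]) ℚ_[p] b e, PadicInt.algebraMap_apply, hba]
    have : v = v' - b • e := by
      rw [← hae, heq]; abel
    rw [this]
    exact Submodule.sub_mem _ hv' (Submodule.smul_mem _ _ hx)
  refine ⟨?_, key⟩
  apply le_antisymm
  · intro v' hv'
    set a : ℚ_[p] := QuadraticMap.polar Q v' x₀ / ((u : ℤ_[p]) : ℚ_[p]) with ha
    set v : W := v' - a • e with hvdef
    have hex : QuadraticMap.polar Q e x₀ = ((u : ℤ_[p]) : ℚ_[p]) := by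
      rw [he, QuadraticMap.polar_smul_left, hx₀, smul_eq_mul]
      field_simp
    have hv : QuadraticMap.polar Q v x₀ = 0 := by
      rw [hvdef, QuadraticMap.polar_sub_left, QuadraticMap.polar_smul_left, hex,
        smul_eq_mul, ha]
      field_simp
      rw [sub_self, mul_zero]
    have heq : v' = v + a • e := by rw [hvdef]; abel
    obtain ⟨h1, h2⟩ := key v' hv' v a hv heq
    rw [heq]
    refine Submodule.add_mem _ (Submodule.mem_sup_left ?_) (Submodule.mem_sup_right ?_)
    · refine Submodule.mem_inf.mpr ⟨h2, ?_⟩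
      rw [Submodule.restrictScalars_mem, perpSpace]
      intro n hn
      obtain ⟨c, rfl⟩ := Submodule.mem_span_singleton.mp hn
      show QuadraticMap.polarBilin Q (c • x₀) v = 0
      rw [map_smul]
      simp only [LinearMap.smul_apply, QuadraticMap.polarBilin_apply_apply, smul_eq_mul]
      rw [QuadraticMap.polar_comm, hv, mul_zero]
    · set b : ℤ_[p] := ⟨a, h1⟩ with hb
      have hba : ((b : ℤ_[p]) : ℚ_[p]) = a := rfl
      have hae : a • e = b • e := by
        rw [← algebraMap_smul (R := ℤ_[p]) ℚ_[p] b e, PadicInt.algebraMap_apply, hba]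
      rw [hae]
      exact Submodule.smul_mem _ _ (Submodule.mem_span_singleton_self e)
  · refine sup_le (fun w hw => (Submodule.mem_inf.mp hw).1) ?_
    rw [Submodule.span_le, Set.singleton_subset_iff]
    exact hx
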